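/- Let A be a unique factorization domain and N = Ae₁ ⊕ … ⊕ Aeₙ a free A-module of finite rank n. Then for every submodule M ⊆ N of rank one there exist an ideal I ⊆ A and a reduced element m₀ ∈ N such that M = I·m₀ = { a·m₀ : a ∈ I }. -/

import Mathlib

/-- An element `x` of a free module is *reduced* if whenever `x = a • x'`,
the scalar `a` is a unit. -/
def IsReducedElem {A N : Type*} [CommRing A] [AddCommGroup N] [Module A N] (x : N) : Prop :=
  ∀ (a : A) (x' : N), x = a • x' → IsUnit a

/-- Lemma 1 (existence part): over a UFD `A`, every rank-one submodule `M` of a free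
`A`-module `N` of finite rank has the form `I • m₀` for an ideal `I ⊆ A` and a reduced
element `m₀ ∈ N`. -/
theorem rank_one_submodule_eq_ideal_smul_reduced
    (A : Type*) [CommRing A] [IsDomain A] [UniqueFactorizationMonoid A]
    (n : ℕ) (N : Type*) [AddCommGroup N] [Module A N] (e : Module.Basis (Fin n) A N)
    (M : Submodule A N) (hM : M ≠ ⊥)
    (hrank : ∀ x ∈ M, ∀ y ∈ M, ∃ c d : A, (c ≠ 0 ∨ d ≠ 0) ∧ c • x + d • y = 0) :
    ∃ (I : Ideal A) (m₀ : N), IsReducedElem (A := A) m₀ ∧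
      (M : Set N) = {m : N | ∃ a ∈ I, a • m₀ = m} := by
  classical
  letI : NormalizationMonoid A := UniqueFactorizationMonoid.normalizationMonoid.toNormalizationMonoid
  letI : NormalizedGCDMonoid A := UniqueFactorizationMonoid.toNormalizedGCDMonoid A
  haveI : NoZeroSMulDivisors A N := by
    constructor
    intro a x h
    rcases eq_or_ne a 0 with rfl | ha
    · exact Or.inl rfl
    · right
      apply e.repr.injective
      have h2 : a • e.repr x = 0 := by rw [← map_smul, h, map_zero]
      rw [map_zero]
      exact (smul_eq_zero.mp h2).resolve_left ha
  obtain ⟨x, hxM, hx0⟩ := (Submodule.ne_bot_iff M).mp hM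
  -- n > 0
  have hne : (Finset.univ : Finset (Fin n)).Nonempty := by
    rcases Nat.eq_zero_or_pos n with rfl | hn
    · exfalso
      apply hx0
      apply e.repr.injective
      ext i
      exact absurd i.2 (by omega)
    · exact ⟨⟨0, hn⟩, Finset.mem_univ _⟩
  set f : Fin n → A := fun i => e.repr x i with hf
  set g : A := Finset.univ.gcd f with hg
  obtain ⟨b, hb, hb1⟩ := Finset.extract_gcd f hne
  set m₀ : N := ∑ i, b i • e i with hm₀
  have hrepr : ∀ i, e.repr m₀ i = b i := fun i => congrFun (e.repr_sum_self b) i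
  have hx : x = g • m₀ := by
    apply e.repr.injective
    ext i
    rw [map_smul]
    simp only [Finsupp.smul_apply, hrepr, smul_eq_mul]
    exact hb i (Finset.mem_univ i)
  have hred : IsReducedElem (A := A) m₀ := by
    intro a x' hax
    have hdvd : a ∣ Finset.univ.gcd b := by
      apply Finset.dvd_gcd
      intro i _
      refine ⟨e.repr x' i, ?_⟩
      rw [← hrepr i, hax, map_smul]
      rfl
    rw [hb1] at hdvd
    exact isUnit_of_dvd_one hdvd
  refine ⟨M.comap (LinearMap.toSpanSingleton A N m₀), m₀, hred, ?_⟩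
  ext y
  simp only [SetLike.mem_coe, Set.mem_setOf_eq, Submodule.mem_comap,
    LinearMap.toSpanSingleton_apply]
  constructor
  · intro hyM
    obtain ⟨c, d, hcd, heq⟩ := hrank x hxM y hyM
    have hd : d ≠ 0 := by
      rintro rfl
      rcases hcd with hc | hc
      · rw [zero_smul, add_zero] at heq
        rcases smul_eq_zero.mp heq with h | h
        exacts [hc h, hx0 h]
      · exact hc rfl
    have heq2 : d • y = (-(c * g)) • m₀ := by
      rw [neg_smul, mul_smul, ← hx, ← neg_smul]
      linear_combination (norm := module) heq
    have hdvd : d ∣ -(c * g) := by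
      have : d ∣ Finset.univ.gcd (fun i => (-(c * g)) * b i) := by
        apply Finset.dvd_gcd
        intro i _
        refine ⟨e.repr y i, ?_⟩
        have := congrFun (congrArg (fun z => (e.repr z : Fin n → A)) heq2) i
        simp only [map_smul, Finsupp.coe_smul, Pi.smul_apply, smul_eq_mul, hrepr] at this
        rw [mul_comm d, ← this, mul_comm]
      rwa [(Finset.gcd_mul_left' (s := Finset.univ) (f := b) (-(c * g))).dvd_iff_dvd_right, hb1, mul_one] at this
    obtain ⟨k, hk⟩ := hdvd
    have hy : y = k • m₀ := by
      have : d • y = d • (k • m₀) := by rw [heq2, hk, mul_smul]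
      exact smul_right_injective N hd this
    exact ⟨k, by rw [← hy]; exact hyM, hy.symm⟩
  · rintro ⟨a, haM, rfl⟩
    exact haM
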